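/- Let C₁ and C₂ be 𝔽₂-linear codes of the same length n, each containing a nonzero codeword, with minimum Hamming distances d₁ and d₂ respectively. Then the Plotkin construction C = {(u, u+v) : u ∈ C₁, v ∈ C₂} is a linear code of length 2n whose minimum Hamming distance equals min(2d₁, d₂). -/

import Mathlib

lemma hammingNorm_fin_append {n : ℕ} (a b : Fin n → ZMod 2) :
    hammingNorm (Fin.append a b) = hammingNorm a + hammingNorm b := by
  simp only [hammingNorm, Finset.card_filter, Fin.sum_univ_add, Fin.append_left,
    Fin.append_right]

def plotkinMap (n : ℕ) :
    ((Fin n → ZMod 2) × (Fin n → ZMod 2)) →ₗ[ZMod 2] (Fin (n + n) → ZMod 2) where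
  toFun p := Fin.append p.1 (p.1 + p.2)
  map_add' p q := by
    funext i
    refine Fin.addCases (fun j => ?_) (fun j => ?_) i <;>
      simp [← Fin.natAdd_eq_addNat, Fin.append_left, Fin.append_right] <;> abel
  map_smul' c p := by
    funext i
    refine Fin.addCases (fun j => ?_) (fun j => ?_) i <;>
      simp [← Fin.natAdd_eq_addNat, Fin.append_left, Fin.append_right, smul_add, mul_add]

lemma norm_le_plotkin {n : ℕ} (u v : Fin n → ZMod 2) :
    hammingNorm v ≤ hammingNorm u + hammingNorm (u + v) := by
  have h1 : hammingDist (u + v) u = hammingNorm v := by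
    rw [hammingDist_eq_hammingNorm]; simp; simp [hammingNorm]
  have h2 : hammingDist (u + v) u ≤ hammingDist (u + v) 0 + hammingDist 0 u :=
    hammingDist_triangle _ _ _
  rw [h1, hammingDist_zero_right, hammingDist_zero_left] at h2
  omega

theorem plotkin_min_distance (n : ℕ)
    (C₁ C₂ : Submodule (ZMod 2) (Fin n → ZMod 2)) (d₁ d₂ : ℕ)
    (hd₁ : IsLeast {w | ∃ u ∈ C₁, u ≠ 0 ∧ w = hammingNorm u} d₁)
    (hd₂ : IsLeast {w | ∃ v ∈ C₂, v ≠ 0 ∧ w = hammingNorm v} d₂) :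
    ∃ C : Submodule (ZMod 2) (Fin (n + n) → ZMod 2),
      (C : Set (Fin (n + n) → ZMod 2))
          = {w | ∃ u ∈ C₁, ∃ v ∈ C₂, w = Fin.append u (u + v)} ∧
      IsLeast {w | ∃ c ∈ C, c ≠ 0 ∧ w = hammingNorm c} (min (2 * d₁) d₂) := by
  obtain ⟨⟨u₁, hu₁C, hu₁ne, hu₁n⟩, hlb₁⟩ := hd₁
  obtain ⟨⟨v₂, hv₂C, hv₂ne, hv₂n⟩, hlb₂⟩ := hd₂
  refine ⟨Submodule.map (plotkinMap n) (C₁.prod C₂), ?_, ?_, ?_⟩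
  · ext w
    simp only [Submodule.map_coe, Set.mem_image, SetLike.mem_coe, Submodule.mem_prod,
      Set.mem_setOf_eq, plotkinMap, LinearMap.coe_mk, AddHom.coe_mk, Prod.exists]
    constructor
    · rintro ⟨u, v, ⟨h1, h2⟩, rfl⟩
      exact ⟨u, h1, v, h2, rfl⟩
    · rintro ⟨u, h1, v, h2, rfl⟩
      exact ⟨u, v, ⟨h1, h2⟩, rfl⟩
  · -- min is attained
    rcases le_or_gt (2 * d₁) d₂ with h | h
    · have hnorm : hammingNorm (Fin.append u₁ (u₁ + 0)) = 2 * d₁ := by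
        rw [hammingNorm_fin_append, add_zero, ← hu₁n]; ring
      refine ⟨Fin.append u₁ (u₁ + 0), ⟨⟨u₁, 0⟩, ⟨hu₁C, C₂.zero_mem⟩, rfl⟩, ?_, ?_⟩
      · have hd : d₁ ≠ 0 := by
          rw [hu₁n]; exact hammingNorm_ne_zero_iff.mpr hu₁ne
        exact hammingNorm_ne_zero_iff.mp (by omega)
      · rw [hnorm, min_eq_left h]
    · have hnorm : hammingNorm (Fin.append (0 : Fin n → ZMod 2) (0 + v₂)) = d₂ := by
        rw [hammingNorm_fin_append, zero_add, hammingNorm_zero, zero_add, hv₂n]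
      refine ⟨Fin.append (0 : Fin n → ZMod 2) (0 + v₂), ⟨⟨0, v₂⟩, ⟨C₁.zero_mem, hv₂C⟩, rfl⟩, ?_, ?_⟩
      · have hd : d₂ ≠ 0 := by
          rw [hv₂n]; exact hammingNorm_ne_zero_iff.mpr hv₂ne
        exact hammingNorm_ne_zero_iff.mp (by omega)
      · rw [hnorm, min_eq_right h.le]
  · -- lower bound
    rintro w ⟨c, hc, hcne, rfl⟩
    obtain ⟨⟨u, v⟩, ⟨huC, hvC⟩, rfl⟩ := hc
    simp only [plotkinMap, LinearMap.coe_mk, AddHom.coe_mk] at hcne ⊢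
    rw [hammingNorm_fin_append]
    by_cases hv : v = 0
    · subst hv
      rw [add_zero] at hcne ⊢
      have hu : u ≠ 0 := by
        rintro rfl
        exact hcne (by funext i; refine Fin.addCases (fun j => ?_) (fun j => ?_) i <;>
          simp [← Fin.natAdd_eq_addNat, Fin.append_left, Fin.append_right])
      have := hlb₁ ⟨u, huC, hu, rfl⟩
      calc min (2 * d₁) d₂ ≤ 2 * d₁ := min_le_left _ _
        _ ≤ hammingNorm u + hammingNorm u := by omega
    · have := hlb₂ ⟨v, hvC, hv, rfl⟩
      have h2 := norm_le_plotkin u v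
      calc min (2 * d₁) d₂ ≤ d₂ := min_le_right _ _
        _ ≤ hammingNorm u + hammingNorm (u + v) := by omega
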